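/- Characterization of the preimage of a hash value: let q be a prime, b an integer with 2 ≤ b ≤ q, u an integer with 1 ≤ u ≤ q−1, v an integer with 0 ≤ v ≤ q−1, and w an integer with 0 ≤ w < b. Then the set { x ∈ {0,1,…,q−1} : ((u·x + v) mod q) mod b = w } equals { u^{−1}·(w + i·b − v) mod q : i ∈ {0, 1, …, ⌊(q−1−w)/b⌋} }, where u^{−1} is the multiplicative inverse of u modulo q; in particular, this set has exactly ⌊(q−1−w)/b⌋ + 1 elements. -/

import Mathlib

theorem stmt14 (q b u v w : ℕ) (hq : q.Prime) (hb2 : 2 ≤ b) (hbq : b ≤ q)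
    (hu1 : 1 ≤ u) (huq : u ≤ q - 1) (hv : v ≤ q - 1) (hw : w < b) :
    {x : ℕ | x < q ∧ ((u * x + v) % q) % b = w} =
      {x : ℕ | ∃ i ≤ (q - 1 - w) / b,
        x = (((u : ZMod q))⁻¹ * ((w : ZMod q) + (i : ZMod q) * (b : ZMod q) - (v : ZMod q))).val} ∧
    {x : ℕ | x < q ∧ ((u * x + v) % q) % b = w}.ncard = (q - 1 - w) / b + 1 := by
  haveI : Fact q.Prime := ⟨hq⟩
  have hq2 : 2 ≤ q := hq.two_le
  have hb0 : 0 < b := by omega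
  have hq0 : 0 < q := by omega
  have huq' : u < q := by omega
  have hu0 : (u : ZMod q) ≠ 0 := by
    simp only [Ne, ZMod.natCast_eq_zero_iff]
    intro h
    have := Nat.le_of_dvd (by omega) h
    omega
  set N := (q - 1 - w) / b with hN
  set g : ℕ → ℕ := fun i =>
    (((u : ZMod q))⁻¹ * ((w : ZMod q) + (i : ZMod q) * (b : ZMod q) - (v : ZMod q))).val with hg
  have hNb : N * b ≤ q - 1 - w := Nat.div_mul_le_self _ _
  -- key: for any i ≤ N, the element g i satisfies the defining condition
  have hback : ∀ i ≤ N, g i < q ∧ (u * (g i) + v) % q = w + i * b := by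
    intro i hi
    have hy : w + i * b < q := by
      have : i * b ≤ N * b := Nat.mul_le_mul_right _ hi
      omega
    constructor
    · exact ZMod.val_lt _
    · have hz : ((u * (g i) + v : ℕ) : ZMod q) = ((w + i * b : ℕ) : ZMod q) := by
        push_cast [hg, ZMod.natCast_val, ZMod.cast_id]
        field_simp
        ring
      have := (ZMod.natCast_eq_natCast_iff' _ _ _).mp hz
      rwa [Nat.mod_eq_of_lt hy] at this
  refine ⟨?_, ?_⟩
  · ext x
    simp only [Set.mem_setOf_eq]
    constructor
    · rintro ⟨hx, hmod⟩
      set y := (u * x + v) % q with hy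
      have hyq : y < q := Nat.mod_lt _ hq0
      have hdm := Nat.div_add_mod' y b
      refine ⟨y / b, ?_, ?_⟩
      · rw [hN, Nat.le_div_iff_mul_le hb0]
        omega
      · have hyeq : y = w + (y / b) * b := by omega
        have hz : ((x : ℕ) : ZMod q) =
            ((u : ZMod q))⁻¹ * ((w : ZMod q) + ((y / b : ℕ) : ZMod q) * (b : ZMod q) - (v : ZMod q)) := by
          have h1 : ((u * x + v : ℕ) : ZMod q) = ((y : ℕ) : ZMod q) := by
            rw [hy]; exact (ZMod.natCast_mod _ _).symm
          rw [hyeq] at h1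
          push_cast at h1
          field_simp
          linear_combination h1
        rw [← hz, ZMod.val_natCast_of_lt hx]
    · rintro ⟨i, hi, hx⟩
      obtain ⟨h1, h2⟩ := hback i hi
      rw [hx]
      refine ⟨h1, ?_⟩
      rw [h2, Nat.add_mul_mod_self_right, Nat.mod_eq_of_lt hw]
  · have hSeq : {x : ℕ | x < q ∧ ((u * x + v) % q) % b = w} =
        ↑((Finset.range (N + 1)).image g) := by
      ext x
      simp only [Set.mem_setOf_eq, Finset.coe_image, Set.mem_image, Finset.mem_coe,
        Finset.mem_range]
      constructor
      · rintro ⟨hx, hmod⟩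
        set y := (u * x + v) % q with hy
        have hyq : y < q := Nat.mod_lt _ hq0
        have hdm := Nat.div_add_mod' y b
        refine ⟨y / b, ?_, ?_⟩
        · have : y / b ≤ N := by rw [hN, Nat.le_div_iff_mul_le hb0]; omega
          omega
        · have hyeq : y = w + (y / b) * b := by omega
          have hz : ((x : ℕ) : ZMod q) =
              ((u : ZMod q))⁻¹ * ((w : ZMod q) + ((y / b : ℕ) : ZMod q) * (b : ZMod q) - (v : ZMod q)) := by
            have h1 : ((u * x + v : ℕ) : ZMod q) = ((y : ℕ) : ZMod q) := by
              rw [hy]; exact (ZMod.natCast_mod _ _).symm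
            rw [hyeq] at h1
            push_cast at h1
            field_simp
            linear_combination h1
          rw [hg]
          simp only
          rw [← hz, ZMod.val_natCast_of_lt hx]
      · rintro ⟨i, hi, hx⟩
        obtain ⟨h1, h2⟩ := hback i (by omega)
        rw [← hx]
        refine ⟨h1, ?_⟩
        rw [h2, Nat.add_mul_mod_self_right, Nat.mod_eq_of_lt hw]
    rw [hSeq, Set.ncard_coe_finset]
    rw [Finset.card_image_of_injOn, Finset.card_range]
    intro i hi j hj hij
    simp only [Finset.mem_coe, Finset.mem_range] at hi hj
    have hcast : (((g i : ℕ)) : ZMod q) = ((g j : ℕ) : ZMod q) := by rw [hij]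
    rw [hg] at hcast
    simp only [ZMod.natCast_val, ZMod.cast_id] at hcast
    have h3 : ((i : ZMod q)) * (b : ZMod q) = (j : ZMod q) * (b : ZMod q) := by
      have := mul_left_cancel₀ (inv_ne_zero hu0) hcast
      linear_combination this
    have h4 : ((i * b : ℕ) : ZMod q) = ((j * b : ℕ) : ZMod q) := by push_cast; exact h3
    have h5 := (ZMod.natCast_eq_natCast_iff' _ _ _).mp h4
    have hib : i * b < q := by
      have : i * b ≤ N * b := Nat.mul_le_mul_right _ (by omega)
      omega
    have hjb : j * b < q := by
      have : j * b ≤ N * b := Nat.mul_le_mul_right _ (by omega)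
      omega
    rw [Nat.mod_eq_of_lt hib, Nat.mod_eq_of_lt hjb] at h5
    exact Nat.eq_of_mul_eq_mul_right hb0 h5
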